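/- Let A, M : ℝ → ℝ^{n×n} be continuous on [t₀, T_f], and let Φ : ℝ × ℝ → ℝ^{n×n} be a transition matrix for A, i.e. for every τ the map t ↦ Φ(t,τ) is differentiable with ∂ₜΦ(t,τ) = A(t)·Φ(t,τ) and Φ(τ,τ) = I, and (t,τ) ↦ Φ(t,τ) and (t,τ) ↦ ∂ₜΦ(t,τ) are continuous on [t₀,T_f]². Then the function X(t) = Φ(t,t₀) X₀ Φ(t,t₀)ᵀ + ∫_{t₀}^t Φ(t,τ) M(τ) Φ(t,τ)ᵀ dτ is differentiable on [t₀,T_f] and satisfies Ẋ(t) = A(t) X(t) + X(t) A(t)ᵀ + M(t) with X(t₀) = X₀. -/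

import Mathlib

open Matrix Set intervalIntegral

attribute [local instance] Matrix.normedAddCommGroup Matrix.normedSpace



section leibniz

variable {E : Type*} [NormedAddCommGroup E] [NormedSpace ℝ E] [CompleteSpace E]

lemma leibniz_aux {a b : ℝ} {f g : ℝ → ℝ → E}
    (hf : ContinuousOn (fun p : ℝ × ℝ => f p.1 p.2) (Icc a b ×ˢ Icc a b))
    (hg : ContinuousOn (fun p : ℝ × ℝ => g p.1 p.2) (Icc a b ×ˢ Icc a b))
    (hd : ∀ τ ∈ Icc a b, ∀ x ∈ Icc a b, HasDerivWithinAt (fun s => f s τ) (g x τ) (Icc a b) x)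
    {t : ℝ} (ht : t ∈ Icc a b) :
    HasDerivWithinAt (fun x => ∫ τ in a..x, f x τ) (f t t + ∫ τ in a..t, g t τ)
      (Icc a b) t := by
  have hab : a ≤ b := ht.1.trans ht.2
  -- slices
  have hfs : ∀ x ∈ Icc a b, ContinuousOn (fun τ => f x τ) (Icc a b) := by
    intro x hx
    exact hf.comp ((continuous_const.prodMk continuous_id).continuousOn) (fun τ hτ => ⟨hx, hτ⟩)
  have hfs' : ∀ τ ∈ Icc a b, ContinuousOn (fun s => f s τ) (Icc a b) := by
    intro τ hτ
    exact hf.comp ((continuous_id.prodMk continuous_const).continuousOn) (fun s hs => ⟨hs, hτ⟩)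
  have hgs : ∀ x ∈ Icc a b, ContinuousOn (fun τ => g x τ) (Icc a b) := by
    intro x hx
    exact hg.comp ((continuous_const.prodMk continuous_id).continuousOn) (fun τ hτ => ⟨hx, hτ⟩)
  have hgs' : ∀ τ ∈ Icc a b, ContinuousOn (fun s => g s τ) (Icc a b) := by
    intro τ hτ
    exact hg.comp ((continuous_id.prodMk continuous_const).continuousOn) (fun s hs => ⟨hs, hτ⟩)
  -- generic integrability
  have hint : ∀ (F : ℝ → E), ContinuousOn F (Icc a b) → ∀ c ∈ Icc a b, ∀ d ∈ Icc a b,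
      IntervalIntegrable F MeasureTheory.volume c d := by
    intro F hF c hc d hd'
    exact (hF.mono (uIcc_subset_Icc hc hd')).intervalIntegrable
  rw [hasDerivWithinAt_iff_isLittleO, Asymptotics.isLittleO_iff]
  intro c hc
  set ε := c / (b - a + 2) with hεdef
  have hεpos : 0 < ε := div_pos hc (by linarith)
  obtain ⟨δ₁, hδ₁, Hf⟩ := Metric.uniformContinuousOn_iff.1
    ((isCompact_Icc.prod isCompact_Icc).uniformContinuousOn_of_continuous hf) ε hεpos
  obtain ⟨δ₂, hδ₂, Hg⟩ := Metric.uniformContinuousOn_iff.1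
    ((isCompact_Icc.prod isCompact_Icc).uniformContinuousOn_of_continuous hg) ε hεpos
  set δ := min δ₁ δ₂ with hδdef
  have hδ : 0 < δ := lt_min hδ₁ hδ₂
  filter_upwards [self_mem_nhdsWithin,
    mem_nhdsWithin_of_mem_nhds (Metric.ball_mem_nhds t hδ)] with x hx hxd
  rw [Metric.mem_ball] at hxd
  -- τ in the in-between interval
  have hτI : ∀ τ ∈ Set.uIoc t x, τ ∈ Icc a b ∧ dist τ t ≤ dist x t := by
    intro τ hτ
    rcases le_total t x with h | h
    · rw [uIoc_of_le h] at hτ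
      refine ⟨⟨ht.1.trans hτ.1.le, hτ.2.trans hx.2⟩, ?_⟩
      rw [Real.dist_eq, Real.dist_eq, abs_of_nonneg (by linarith [hτ.1.le]),
        abs_of_nonneg (by linarith)]
      linarith [hτ.2]
    · rw [uIoc_of_ge h] at hτ
      refine ⟨⟨hx.1.trans hτ.1.le, hτ.2.trans ht.2⟩, ?_⟩
      rw [Real.dist_eq, Real.dist_eq, abs_of_nonpos (by linarith [hτ.2]),
        abs_of_nonpos (by linarith)]
      linarith [hτ.1.le]
  -- key pointwise bound for the second piece
  have key : ∀ τ ∈ Icc a b, ‖f x τ - f t τ - (x - t) • g t τ‖ ≤ ε * |x - t| := by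
    intro τ hτ
    have hgτint : IntervalIntegrable (fun s => g s τ) MeasureTheory.volume t x :=
      hint _ (hgs' τ hτ) t ht x hx
    have hFTC : (∫ s in t..x, g s τ) = f x τ - f t τ := by
      apply intervalIntegral.integral_eq_sub_of_hasDeriv_right
      · exact (hfs' τ hτ).mono (uIcc_subset_Icc ht hx)
      · intro s hs
        have hs' : s ∈ Ioo a b := by
          rcases le_total t x with h | h
          · rw [min_eq_left h, max_eq_right h] at hs
            exact ⟨lt_of_le_of_lt ht.1 hs.1, lt_of_lt_of_le hs.2 hx.2⟩
          · rw [min_eq_right h, max_eq_left h] at hs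
            exact ⟨lt_of_le_of_lt hx.1 hs.1, lt_of_lt_of_le hs.2 ht.2⟩
        exact ((hd τ hτ s (Ioo_subset_Icc_self hs')).hasDerivAt
          (Icc_mem_nhds hs'.1 hs'.2)).hasDerivWithinAt
      · exact hgτint
    have heq : f x τ - f t τ - (x - t) • g t τ = ∫ s in t..x, (g s τ - g t τ) := by
      rw [intervalIntegral.integral_sub hgτint intervalIntegrable_const, hFTC,
        intervalIntegral.integral_const]
    rw [heq]
    apply intervalIntegral.norm_integral_le_of_norm_le_const
    intro s hs
    obtain ⟨hsmem, hsd⟩ := hτI s hs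
    have := Hg (s, τ) ⟨hsmem, hτ⟩ (t, τ) ⟨ht, hτ⟩ ?_
    · rw [← dist_eq_norm]; exact this.le
    · rw [Prod.dist_eq, dist_self]
      exact max_lt (((hsd.trans_lt hxd)).trans_le (min_le_right δ₁ δ₂)) hδ₂
  have haI : a ∈ Icc a b := ⟨le_refl a, hab⟩
  have Ifx_at : IntervalIntegrable (fun τ => f x τ) MeasureTheory.volume a t :=
    hint _ (hfs x hx) a haI t ht
  have Ifx_tx : IntervalIntegrable (fun τ => f x τ) MeasureTheory.volume t x :=
    hint _ (hfs x hx) t ht x hx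
  have Ift : IntervalIntegrable (fun τ => f t τ) MeasureTheory.volume a t :=
    hint _ (hfs t ht) a haI t ht
  have Igt : IntervalIntegrable (fun τ => g t τ) MeasureTheory.volume a t :=
    hint _ (hgs t ht) a haI t ht
  have Igts : IntervalIntegrable (fun τ => (x - t) • g t τ) MeasureTheory.volume a t := by
    exact Igt.smul (x - t)
  have anchor :
      (∫ τ in a..x, f x τ) - (∫ τ in a..t, f t τ) -
        (x - t) • (f t t + ∫ τ in a..t, g t τ)
      = (∫ τ in t..x, (f x τ - f t t)) +
        ∫ τ in a..t, (f x τ - f t τ - (x - t) • g t τ) := by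
    rw [intervalIntegral.integral_sub Ifx_tx intervalIntegrable_const,
        intervalIntegral.integral_const,
        intervalIntegral.integral_sub (Ifx_at.sub Ift) Igts,
        intervalIntegral.integral_sub Ifx_at Ift,
        intervalIntegral.integral_smul,
        ← intervalIntegral.integral_add_adjacent_intervals Ifx_at Ifx_tx,
        smul_add]
    abel
  have h1 : ‖∫ τ in t..x, (f x τ - f t t)‖ ≤ ε * |x - t| := by
    apply intervalIntegral.norm_integral_le_of_norm_le_const
    intro τ hτ
    obtain ⟨hτmem, hτd⟩ := hτI τ hτ
    have hHf := Hf (x, τ) ⟨hx, hτmem⟩ (t, t) ⟨ht, ht⟩ ?_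
    · rw [← dist_eq_norm]; exact hHf.le
    · rw [Prod.dist_eq]
      exact max_lt (hxd.trans_le (min_le_left _ _))
        ((hτd.trans_lt hxd).trans_le (min_le_left _ _))
  have h2 : ‖∫ τ in a..t, (f x τ - f t τ - (x - t) • g t τ)‖ ≤ ε * |x - t| * (b - a) := by
    have hb := intervalIntegral.norm_integral_le_of_norm_le_const (C := ε * |x - t|)
      (a := a) (b := t) (f := fun τ => f x τ - f t τ - (x - t) • g t τ) ?_
    · refine hb.trans ?_
      have hta : |t - a| ≤ b - a := by
        rw [abs_of_nonneg (by linarith [ht.1])]; linarith [ht.2]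
      have hnn : (0:ℝ) ≤ ε * |x - t| := by positivity
      exact mul_le_mul_of_nonneg_left hta hnn
    · intro τ hτ
      apply key
      have hsub : Set.uIoc a t ⊆ Icc a b := by
        rw [uIoc_of_le ht.1]
        exact Ioc_subset_Icc_self.trans (Icc_subset_Icc le_rfl ht.2)
      exact hsub hτ
  have hεc : ε * (b - a + 2) = c := div_mul_cancel₀ c (by linarith)
  calc ‖(∫ τ in a..x, f x τ) - (∫ τ in a..t, f t τ) -
        (x - t) • (f t t + ∫ τ in a..t, g t τ)‖
      = ‖(∫ τ in t..x, (f x τ - f t t)) +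
          ∫ τ in a..t, (f x τ - f t τ - (x - t) • g t τ)‖ := by rw [anchor]
    _ ≤ ‖∫ τ in t..x, (f x τ - f t t)‖ +
          ‖∫ τ in a..t, (f x τ - f t τ - (x - t) • g t τ)‖ := norm_add_le _ _
    _ ≤ ε * |x - t| + ε * |x - t| * (b - a) := add_le_add h1 h2
    _ ≤ c * ‖x - t‖ := by
        rw [Real.norm_eq_abs]
        nlinarith [abs_nonneg (x - t), hεpos.le]

end leibniz



section matrixAux

variable {n : ℕ}

section

abbrev matTopN (n : ℕ) : TopologicalSpace (Matrix (Fin n) (Fin n) ℝ) :=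
  PseudoMetricSpace.toUniformSpace.toTopologicalSpace

attribute [local instance] matTopN

noncomputable def mulCLM (n : ℕ) : Matrix (Fin n) (Fin n) ℝ →L[ℝ]
    Matrix (Fin n) (Fin n) ℝ →L[ℝ] Matrix (Fin n) (Fin n) ℝ :=
  LinearMap.toContinuousLinearMap
  { toFun := fun A => LinearMap.toContinuousLinearMap (LinearMap.mulLeft ℝ A)
    map_add' := by
      intro A B; ext C i j
      simp [LinearMap.mulLeft_apply, add_mul]
    map_smul' := by
      intro c A; ext C i j
      simp [LinearMap.mulLeft_apply, smul_mul_assoc] }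

@[simp] lemma mulCLM_apply (A B : Matrix (Fin n) (Fin n) ℝ) : mulCLM n A B = A * B := by
  simp [mulCLM]

end

noncomputable def tCLM (n : ℕ) : Matrix (Fin n) (Fin n) ℝ →L[ℝ] Matrix (Fin n) (Fin n) ℝ :=
  LinearMap.toContinuousLinearMap
    (Matrix.transposeLinearEquiv (Fin n) (Fin n) ℝ ℝ).toLinearMap

@[simp] lemma tCLM_apply (A : Matrix (Fin n) (Fin n) ℝ) : tCLM n A = Aᵀ := by
  simp [tCLM, Matrix.transposeLinearEquiv]

lemma toN {u : ℝ → Matrix (Fin n) (Fin n) ℝ}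
    {u' : Matrix (Fin n) (Fin n) ℝ} {s : Set ℝ} {x : ℝ}
    (hu : HasDerivWithinAt u u' s x) : @HasDerivWithinAt ℝ _ (Matrix (Fin n) (Fin n) ℝ) Matrix.normedAddCommGroup.toAddCommGroup Matrix.normedSpace.toModule PseudoMetricSpace.toUniformSpace.toTopologicalSpace _ u u' s x := hu

lemma ofN {u : ℝ → Matrix (Fin n) (Fin n) ℝ}
    {u' : Matrix (Fin n) (Fin n) ℝ} {s : Set ℝ} {x : ℝ}
    (hu : @HasDerivWithinAt ℝ _ (Matrix (Fin n) (Fin n) ℝ) Matrix.normedAddCommGroup.toAddCommGroup Matrix.normedSpace.toModule PseudoMetricSpace.toUniformSpace.toTopologicalSpace _ u u' s x) : HasDerivWithinAt u u' s x := hu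

lemma HasDerivWithinAt.mmul {u v : ℝ → Matrix (Fin n) (Fin n) ℝ}
    {u' v' : Matrix (Fin n) (Fin n) ℝ} {s : Set ℝ} {x : ℝ}
    (hu : HasDerivWithinAt u u' s x) (hv : HasDerivWithinAt v v' s x) :
    HasDerivWithinAt (fun y => u y * v y) (u' * v x + u x * v') s x := by
  have h1 : HasDerivWithinAt (fun y => mulCLM n (u y)) (mulCLM n u') s x :=
    (mulCLM n).hasFDerivAt.comp_hasDerivWithinAt x (toN hu)
  exact ofN (by simpa using h1.clm_apply (toN hv))

lemma HasDerivWithinAt.mtrans {u : ℝ → Matrix (Fin n) (Fin n) ℝ}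
    {u' : Matrix (Fin n) (Fin n) ℝ} {s : Set ℝ} {x : ℝ}
    (hu : HasDerivWithinAt u u' s x) :
    HasDerivWithinAt (fun y => (u y)ᵀ) u'ᵀ s x := by
  exact ofN (by have h := (tCLM n).hasFDerivAt.comp_hasDerivWithinAt x (toN hu); exact h)

lemma ContinuousOn.mmul {α : Type*} [TopologicalSpace α]
    {f g : α → Matrix (Fin n) (Fin n) ℝ} {s : Set α}
    (hf : ContinuousOn f s) (hg : ContinuousOn g s) :
    ContinuousOn (fun p => f p * g p) s := by
  have h : Continuous (fun q : Matrix (Fin n) (Fin n) ℝ × Matrix (Fin n) (Fin n) ℝ =>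
      q.1 * q.2) := continuous_fst.matrix_mul continuous_snd
  exact h.comp_continuousOn (hf.prodMk hg)

lemma ContinuousOn.mtrans {α : Type*} [TopologicalSpace α]
    {f : α → Matrix (Fin n) (Fin n) ℝ} {s : Set α}
    (hf : ContinuousOn f s) : ContinuousOn (fun p => (f p)ᵀ) s :=
  (Continuous.matrix_transpose continuous_id).comp_continuousOn hf

end matrixAux
set_option maxHeartbeats 1000000 in
theorem dle_general_solution
    (n : ℕ) (hn : 0 < n) (t₀ Tf : ℝ) (ht : t₀ ≤ Tf)
    (A M : ℝ → Matrix (Fin n) (Fin n) ℝ)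
    (X₀ : Matrix (Fin n) (Fin n) ℝ)
    (hA : ContinuousOn A (Icc t₀ Tf))
    (hM : ContinuousOn M (Icc t₀ Tf))
    (Φ : ℝ → ℝ → Matrix (Fin n) (Fin n) ℝ)
    (hΦderiv : ∀ τ ∈ Icc t₀ Tf, ∀ t ∈ Icc t₀ Tf,
      HasDerivWithinAt (fun s => Φ s τ) (A t * Φ t τ) (Icc t₀ Tf) t)
    (hΦinit : ∀ τ, Φ τ τ = 1)
    (hΦcont : ContinuousOn (fun p : ℝ × ℝ => Φ p.1 p.2) (Icc t₀ Tf ×ˢ Icc t₀ Tf))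
    (hΦ'cont : ContinuousOn (fun p : ℝ × ℝ => A p.1 * Φ p.1 p.2) (Icc t₀ Tf ×ˢ Icc t₀ Tf))
    (X : ℝ → Matrix (Fin n) (Fin n) ℝ)
    (hX : ∀ t, X t = Φ t t₀ * X₀ * (Φ t t₀)ᵀ + ∫ τ in t₀..t, Φ t τ * M τ * (Φ t τ)ᵀ) :
    X t₀ = X₀ ∧
      ∀ t ∈ Icc t₀ Tf,
        HasDerivWithinAt X (A t * X t + X t * (A t)ᵀ + M t) (Icc t₀ Tf) t := by
  have hXeq : X = fun t => Φ t t₀ * X₀ * (Φ t t₀)ᵀ + ∫ τ in t₀..t, Φ t τ * M τ * (Φ t τ)ᵀ :=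
    funext hX
  subst hXeq
  have ht₀ : t₀ ∈ Icc t₀ Tf := ⟨le_refl _, ht⟩
  constructor
  · simp [hΦinit, intervalIntegral.integral_same]
  intro t htm
  -- the integrand and its time-derivative
  set f : ℝ → ℝ → Matrix (Fin n) (Fin n) ℝ := fun x τ => Φ x τ * M τ * (Φ x τ)ᵀ with hfdef
  set g : ℝ → ℝ → Matrix (Fin n) (Fin n) ℝ :=
    fun x τ => A x * f x τ + f x τ * (A x)ᵀ with hgdef
  have hMc : ContinuousOn (fun p : ℝ × ℝ => M p.2) (Icc t₀ Tf ×ˢ Icc t₀ Tf) :=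
    hM.comp continuous_snd.continuousOn (fun p hp => hp.2)
  have hAc : ContinuousOn (fun p : ℝ × ℝ => A p.1) (Icc t₀ Tf ×ˢ Icc t₀ Tf) :=
    hA.comp continuous_fst.continuousOn (fun p hp => hp.1)
  have hfc : ContinuousOn (fun p : ℝ × ℝ => f p.1 p.2) (Icc t₀ Tf ×ˢ Icc t₀ Tf) :=
    (hΦcont.mmul hMc).mmul hΦcont.mtrans
  have hgc : ContinuousOn (fun p : ℝ × ℝ => g p.1 p.2) (Icc t₀ Tf ×ˢ Icc t₀ Tf) :=
    (hAc.mmul hfc).add (hfc.mmul hAc.mtrans)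
  have hfd : ∀ τ ∈ Icc t₀ Tf, ∀ x ∈ Icc t₀ Tf,
      HasDerivWithinAt (fun s => f s τ) (g x τ) (Icc t₀ Tf) x := by
    intro τ hτ x hx
    have h1 := hΦderiv τ hτ x hx
    have h2 := (h1.mmul (hasDerivWithinAt_const x _ (M τ))).mmul h1.mtrans
    convert h2 using 1
    simp [hgdef, hfdef, Matrix.transpose_mul, mul_assoc, mul_add, add_mul]
  have hG := leibniz_aux hfc hgc hfd htm
  have h1 := hΦderiv t₀ ht₀ t htm
  have hP := (h1.mmul (hasDerivWithinAt_const t _ X₀)).mmul h1.mtrans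
  have htot := ofN (hP.add hG)
  convert htot using 1
  · rfl
  -- identify the derivative values
  have hftt : f t t = M t := by simp [hfdef, hΦinit]
  have hQint : @IntervalIntegrable (Matrix (Fin n) (Fin n) ℝ) PseudoMetricSpace.toUniformSpace.toTopologicalSpace _ (fun τ => f t τ) MeasureTheory.volume t₀ t := by
    apply ContinuousOn.intervalIntegrable
    apply (hfc.comp ((continuous_const.prodMk continuous_id).continuousOn)
      (fun τ hτ => ⟨htm, hτ⟩)).mono
    exact uIcc_subset_Icc ht₀ htm
  have hL1 : (∫ τ in t₀..t, A t * f t τ) = A t * ∫ τ in t₀..t, f t τ := by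
    have := (mulCLM n (A t)).intervalIntegral_comp_comm hQint
    simpa using this
  have hL2 : (∫ τ in t₀..t, f t τ * (A t)ᵀ) = (∫ τ in t₀..t, f t τ) * (A t)ᵀ := by
    have := ((mulCLM n).flip ((A t)ᵀ)).intervalIntegral_comp_comm hQint
    simpa using this
  have hIg : (∫ τ in t₀..t, g t τ)
      = A t * (∫ τ in t₀..t, Φ t τ * M τ * (Φ t τ)ᵀ)
        + (∫ τ in t₀..t, Φ t τ * M τ * (Φ t τ)ᵀ) * (A t)ᵀ := by
    have hi1 : @IntervalIntegrable (Matrix (Fin n) (Fin n) ℝ) PseudoMetricSpace.toUniformSpace.toTopologicalSpace _ (fun τ => A t * f t τ) MeasureTheory.volume t₀ t := by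
      apply ContinuousOn.intervalIntegrable
      apply (continuousOn_const.mmul (hfc.comp
        ((continuous_const.prodMk continuous_id).continuousOn)
        (fun τ hτ => ⟨htm, hτ⟩))).mono
      exact uIcc_subset_Icc ht₀ htm
    have hi2 : @IntervalIntegrable (Matrix (Fin n) (Fin n) ℝ) PseudoMetricSpace.toUniformSpace.toTopologicalSpace _ (fun τ => f t τ * (A t)ᵀ) MeasureTheory.volume t₀ t := by
      apply ContinuousOn.intervalIntegrable
      apply ((hfc.comp ((continuous_const.prodMk continuous_id).continuousOn)
        (fun τ hτ => ⟨htm, hτ⟩)).mmul continuousOn_const).mono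
      exact uIcc_subset_Icc ht₀ htm
    rw [hgdef]
    rw [intervalIntegral.integral_add hi1 hi2, hL1, hL2]
  beta_reduce
  rw [hftt, hIg]
  set Q := ∫ τ in t₀..t, Φ t τ * M τ * (Φ t τ)ᵀ with hQdef
  simp only [Matrix.transpose_mul, mul_add, add_mul, mul_assoc, mul_zero, zero_mul,
    add_zero, zero_add]
  abel
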